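/- Let $F$ denote the right-hand side of the Toda lattice in shifted variables: for a pair of real sequences $x=(x_{1,n},x_{2,n})_{n\in\mathbb{Z}}$, $F(x)_{1,n}=\tfrac12\,(x_{1,n}+\chi_{n<0})(x_{2,n+1}-x_{2,n})$ and $F(x)_{2,n}=(x_{1,n}+\chi_{n<0})^2-(x_{1,n-1}+\chi_{n-1<0})^2$, where $\chi_{n<0}=1$ if $n<0$ and $0$ otherwise. Then for every $r>0$ there exists a constant $K(r)>0$ such that for all pairs of sequences $x,y$ with $\|x\|_B\le r$ and $\|y\|_B\le r$ one has $\|F(x)\|_B\le K(r)$ and $\|F(x)-F(y)\|_B\le K(r)\|x-y\|_B$; in particular $F$ maps $B$ into $B$ and is Lipschitz on bounded subsets of $B$. -/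
import Mathlib


/-- The `B`-norm of a pair of real sequences:
`‖y‖_B = sup_{n ≥ 0} (|y₁ₙ| + |y₂ₙ|) + ∑_{n < 0} |n| (|y₁ₙ| + |y₂ₙ|)`. -/
noncomputable def normB (x : (ℤ → ℝ) × (ℤ → ℝ)) : ℝ :=
  (⨆ n : ℕ, (|x.1 (n : ℤ)| + |x.2 (n : ℤ)|)) +
    ∑' k : ℕ, ((k : ℝ) + 1) * (|x.1 (-(k : ℤ) - 1)| + |x.2 (-(k : ℤ) - 1)|)

/-- Membership in the Banach space `B`: the sup over `n ≥ 0` is finite and the weighted sum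
over `n < 0` converges. -/
def memB (x : (ℤ → ℝ) × (ℤ → ℝ)) : Prop :=
  BddAbove (Set.range fun n : ℕ => |x.1 (n : ℤ)| + |x.2 (n : ℤ)|) ∧
  Summable (fun k : ℕ => ((k : ℝ) + 1) * (|x.1 (-(k : ℤ) - 1)| + |x.2 (-(k : ℤ) - 1)|))

/-- The indicator `χ_{n<0}`. -/
def chiNeg (n : ℤ) : ℝ := if n < 0 then 1 else 0

/-- The right-hand side of the Toda lattice in the shifted variables
`x₁ₙ = aₙ - χ_{n<0}`, `x₂ₙ = bₙ`. -/
noncomputable def todaF (x : (ℤ → ℝ) × (ℤ → ℝ)) : (ℤ → ℝ) × (ℤ → ℝ) :=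
  (fun n => (1 / 2) * (x.1 n + chiNeg n) * (x.2 (n + 1) - x.2 n),
   fun n => (x.1 n + chiNeg n) ^ 2 - (x.1 (n - 1) + chiNeg (n - 1)) ^ 2)

/-- abbreviation for the pointwise size -/
noncomputable def DD (x : (ℤ → ℝ) × (ℤ → ℝ)) (n : ℤ) : ℝ := |x.1 n| + |x.2 n|

lemma DD_nonneg (x : (ℤ → ℝ) × (ℤ → ℝ)) (n : ℤ) : 0 ≤ DD x n :=
  add_nonneg (abs_nonneg _) (abs_nonneg _)

noncomputable def supB (x : (ℤ → ℝ) × (ℤ → ℝ)) : ℝ := ⨆ n : ℕ, DD x (n : ℤ)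

noncomputable def sumB (x : (ℤ → ℝ) × (ℤ → ℝ)) : ℝ :=
  ∑' k : ℕ, ((k : ℝ) + 1) * DD x (-(k : ℤ) - 1)

lemma normB_eq (x : (ℤ → ℝ) × (ℤ → ℝ)) : normB x = supB x + sumB x := rfl

lemma memB_iff (x : (ℤ → ℝ) × (ℤ → ℝ)) :
    memB x ↔ BddAbove (Set.range fun n : ℕ => DD x (n : ℤ)) ∧
      Summable (fun k : ℕ => ((k : ℝ) + 1) * DD x (-(k : ℤ) - 1)) := Iff.rfl

lemma supB_nonneg (x : (ℤ → ℝ) × (ℤ → ℝ)) (hx : memB x) : 0 ≤ supB x :=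
  le_trans (DD_nonneg x 0) (le_ciSup hx.1 0)

lemma sumB_nonneg (x : (ℤ → ℝ) × (ℤ → ℝ)) : 0 ≤ sumB x :=
  tsum_nonneg fun k => mul_nonneg (by positivity) (DD_nonneg _ _)

lemma supB_le_normB (x : (ℤ → ℝ) × (ℤ → ℝ)) : supB x ≤ normB x := by
  rw [normB_eq]; linarith [sumB_nonneg x]

lemma sumB_le_normB (x : (ℤ → ℝ) × (ℤ → ℝ)) (hx : memB x) : sumB x ≤ normB x := by
  rw [normB_eq]; linarith [supB_nonneg x hx]

lemma DD_le_supB (x : (ℤ → ℝ) × (ℤ → ℝ)) (hx : memB x) (n : ℕ) : DD x (n : ℤ) ≤ supB x :=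
  le_ciSup hx.1 n

lemma weighted_le_sumB (x : (ℤ → ℝ) × (ℤ → ℝ)) (hx : memB x) (k : ℕ) :
    ((k : ℝ) + 1) * DD x (-(k : ℤ) - 1) ≤ sumB x :=
  Summable.le_tsum hx.2 k fun j _ => mul_nonneg (by positivity) (DD_nonneg _ _)

lemma DD_neg_le_sumB (x : (ℤ → ℝ) × (ℤ → ℝ)) (hx : memB x) (k : ℕ) :
    DD x (-(k : ℤ) - 1) ≤ sumB x := by
  have h := weighted_le_sumB x hx k
  nlinarith [DD_nonneg x (-(k : ℤ) - 1), Nat.cast_nonneg (α := ℝ) k]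

/-- pointwise bound for all integers -/
lemma DD_le (x : (ℤ → ℝ) × (ℤ → ℝ)) (hx : memB x) (n : ℤ) : DD x n ≤ supB x + sumB x := by
  rcases le_or_gt 0 n with h | h
  · obtain ⟨m, rfl⟩ := Int.eq_ofNat_of_zero_le h
    exact le_trans (DD_le_supB x hx m) (by linarith [sumB_nonneg x])
  · obtain ⟨k, hk⟩ : ∃ k : ℕ, n = -(k : ℤ) - 1 := by
      refine ⟨(-n - 1).toNat, ?_⟩
      omega
    rw [hk]
    exact le_trans (DD_neg_le_sumB x hx k) (by linarith [supB_nonneg x hx])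

lemma shift_lemma (e z : (ℤ → ℝ) × (ℤ → ℝ)) (he : memB e) (C : ℝ) (hC : 0 ≤ C)
    (hdom : ∀ n : ℤ, DD z n ≤ C * (DD e n + DD e (n - 1) + DD e (n + 1))) :
    memB z ∧ normB z ≤ 7 * C * normB e := by
  set S := supB e with hS
  set T := sumB e with hT
  have hS0 : 0 ≤ S := supB_nonneg e he
  have hT0 : 0 ≤ T := sumB_nonneg e
  have hDDle : ∀ n : ℤ, DD e n ≤ S + T := DD_le e he
  -- sup part
  have hsupdom : ∀ n : ℕ, DD z (n : ℤ) ≤ 3 * C * (S + T) := by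
    intro n
    calc DD z (n : ℤ) ≤ C * (DD e n + DD e (n - 1) + DD e (n + 1)) := hdom n
      _ ≤ C * ((S + T) + (S + T) + (S + T)) := by
          apply mul_le_mul_of_nonneg_left _ hC
          have := hDDle (n : ℤ); have := hDDle ((n : ℤ) - 1); have := hDDle ((n : ℤ) + 1)
          linarith
      _ = 3 * C * (S + T) := by ring
  have hbddz : BddAbove (Set.range fun n : ℕ => DD z (n : ℤ)) := by
    refine ⟨3 * C * (S + T), ?_⟩
    rintro _ ⟨n, rfl⟩; exact hsupdom n
  have hsupz : supB z ≤ 3 * C * (S + T) := ciSup_le hsupdom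
  -- sum part
  set f : ℕ → ℝ := fun k => ((k : ℝ) + 1) * DD e (-(k : ℤ) - 1) with hf
  set g : ℕ → ℝ := fun k => ((k : ℝ) + 1) * DD e (-(k : ℤ) - 2) with hg
  set h : ℕ → ℝ := fun k => ((k : ℝ) + 1) * DD e (-(k : ℤ)) with hh
  have hfsum : Summable f := he.2
  have hfnn : ∀ k, 0 ≤ f k := fun k => mul_nonneg (by positivity) (DD_nonneg _ _)
  have hgnn : ∀ k, 0 ≤ g k := fun k => mul_nonneg (by positivity) (DD_nonneg _ _)
  have hhnn : ∀ k, 0 ≤ h k := fun k => mul_nonneg (by positivity) (DD_nonneg _ _)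
  have hfshift : ∀ k : ℕ, f (k + 1) = ((k : ℝ) + 2) * DD e (-(k : ℤ) - 2) := by
    intro k
    have : (-((k + 1 : ℕ) : ℤ) - 1) = -(k : ℤ) - 2 := by push_cast; ring
    simp only [hf, this]; push_cast; ring
  have hfs1 : Summable (fun k => f (k + 1)) := (summable_nat_add_iff 1).mpr hfsum
  have hgle : ∀ k, g k ≤ f (k + 1) := by
    intro k
    rw [hfshift k]
    exact mul_le_mul_of_nonneg_right (by linarith) (DD_nonneg _ _)
  have hgsum : Summable g := Summable.of_nonneg_of_le hgnn hgle hfs1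
  have htsumf1 : ∑' k, f (k + 1) ≤ T := by
    have h0 := Summable.tsum_eq_zero_add hfsum
    have : T = f 0 + ∑' k, f (k + 1) := h0
    linarith [hfnn 0]
  have hgT : ∑' k, g k ≤ T := le_trans (Summable.tsum_le_tsum hgle hgsum hfs1) htsumf1
  have hhshift : ∀ k : ℕ, h (k + 1) = ((k : ℝ) + 2) * DD e (-(k : ℤ) - 1) := by
    intro k
    have : (-((k + 1 : ℕ) : ℤ)) = -(k : ℤ) - 1 := by push_cast; ring
    simp only [hh, this]; push_cast; ring
  have hhle : ∀ k, h (k + 1) ≤ 2 * f k := by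
    intro k
    rw [hhshift k]
    have hfk : f k = ((k : ℝ) + 1) * DD e (-(k : ℤ) - 1) := rfl
    rw [hfk]
    have := DD_nonneg e (-(k : ℤ) - 1)
    nlinarith [Nat.cast_nonneg (α := ℝ) k]
  have hhs1 : Summable (fun k => h (k + 1)) :=
    Summable.of_nonneg_of_le (fun k => hhnn (k + 1)) hhle (hfsum.mul_left 2)
  have hhsum : Summable h := (summable_nat_add_iff 1).mp hhs1
  have hhtsum : ∑' k, h k ≤ S + 2 * T := by
    have h0 : ∑' k, h k = h 0 + ∑' k, h (k + 1) := Summable.tsum_eq_zero_add hhsum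
    have h1 : ∑' k, h (k + 1) ≤ ∑' k, 2 * f k :=
      Summable.tsum_le_tsum hhle hhs1 (hfsum.mul_left 2)
    have h2 : ∑' k, 2 * f k = 2 * T := by
      rw [tsum_mul_left]
      rfl
    have h3 : h 0 ≤ S := by
      have : h 0 = DD e ((0 : ℕ) : ℤ) := by simp [hh]
      rw [this]; exact DD_le_supB e he 0
    linarith
  -- bound on the weighted terms of z
  set w : ℕ → ℝ := fun k => ((k : ℝ) + 1) * DD z (-(k : ℤ) - 1) with hw
  have hwle : ∀ k, w k ≤ C * (f k + g k + h k) := by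
    intro k
    have hd := hdom (-(k : ℤ) - 1)
    have e1 : (-(k : ℤ) - 1) - 1 = -(k : ℤ) - 2 := by ring
    have e2 : (-(k : ℤ) - 1) + 1 = -(k : ℤ) := by ring
    rw [e1, e2] at hd
    have hk1 : (0:ℝ) ≤ (k : ℝ) + 1 := by positivity
    calc w k ≤ ((k : ℝ) + 1) * (C * (DD e (-(k : ℤ) - 1) + DD e (-(k : ℤ) - 2) + DD e (-(k : ℤ)))) :=
          mul_le_mul_of_nonneg_left hd hk1
      _ = C * (f k + g k + h k) := by simp only [hf, hg, hh]; ring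
  have hbsum : Summable (fun k => C * (f k + g k + h k)) :=
    (((hfsum.add hgsum).add hhsum).mul_left C)
  have hwnn : ∀ k, 0 ≤ w k := fun k => mul_nonneg (by positivity) (DD_nonneg _ _)
  have hwsum : Summable w := Summable.of_nonneg_of_le hwnn hwle hbsum
  have hwtsum : ∑' k, w k ≤ 4 * C * (S + T) := by
    have h1 : ∑' k, w k ≤ ∑' k, C * (f k + g k + h k) := Summable.tsum_le_tsum hwle hwsum hbsum
    have h2 : ∑' k, C * (f k + g k + h k) = C * ((∑' k, f k) + (∑' k, g k) + (∑' k, h k)) := by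
      rw [tsum_mul_left, Summable.tsum_add (hfsum.add hgsum) hhsum, Summable.tsum_add hfsum hgsum]
    have hfT : ∑' k, f k = T := rfl
    have hcomb : (∑' k, f k) + (∑' k, g k) + (∑' k, h k) ≤ S + 4 * T := by
      rw [hfT]; linarith
    calc ∑' k, w k ≤ C * ((∑' k, f k) + (∑' k, g k) + (∑' k, h k)) := by rw [← h2]; exact h1
      _ ≤ C * (S + 4 * T) := mul_le_mul_of_nonneg_left hcomb hC
      _ ≤ 4 * C * (S + T) := by nlinarith
  refine ⟨⟨hbddz, hwsum⟩, ?_⟩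
  have : normB z = supB z + sumB z := rfl
  rw [this, normB_eq]
  have : sumB z = ∑' k, w k := rfl
  rw [this]
  nlinarith

lemma DD_add_le (a b : (ℤ → ℝ) × (ℤ → ℝ)) (n : ℤ) : DD (a + b) n ≤ DD a n + DD b n := by
  simp only [DD, Prod.fst_add, Prod.snd_add, Pi.add_apply]
  have := abs_add_le (a.1 n) (b.1 n)
  have := abs_add_le (a.2 n) (b.2 n)
  linarith

lemma memB_add (a b : (ℤ → ℝ) × (ℤ → ℝ)) (ha : memB a) (hb : memB b) :
    memB (a + b) ∧ normB (a + b) ≤ normB a + normB b := by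
  have hsupdom : ∀ n : ℕ, DD (a + b) (n : ℤ) ≤ supB a + supB b := fun n =>
    le_trans (DD_add_le a b n) (add_le_add (DD_le_supB a ha n) (DD_le_supB b hb n))
  have hbdd : BddAbove (Set.range fun n : ℕ => DD (a + b) (n : ℤ)) :=
    ⟨supB a + supB b, by rintro _ ⟨n, rfl⟩; exact hsupdom n⟩
  have hsup : supB (a + b) ≤ supB a + supB b := ciSup_le hsupdom
  set fa : ℕ → ℝ := fun k => ((k : ℝ) + 1) * DD a (-(k : ℤ) - 1)
  set fb : ℕ → ℝ := fun k => ((k : ℝ) + 1) * DD b (-(k : ℤ) - 1)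
  have hfa : Summable fa := ha.2
  have hfb : Summable fb := hb.2
  have hle : ∀ k : ℕ, ((k : ℝ) + 1) * DD (a + b) (-(k : ℤ) - 1) ≤ fa k + fb k := by
    intro k
    have h1 := DD_add_le a b (-(k : ℤ) - 1)
    have hk : (0:ℝ) ≤ (k : ℝ) + 1 := by positivity
    calc ((k : ℝ) + 1) * DD (a + b) (-(k : ℤ) - 1)
        ≤ ((k : ℝ) + 1) * (DD a (-(k : ℤ) - 1) + DD b (-(k : ℤ) - 1)) :=
          mul_le_mul_of_nonneg_left h1 hk
      _ = fa k + fb k := by ring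
  have hsumab : Summable (fun k : ℕ => ((k : ℝ) + 1) * DD (a + b) (-(k : ℤ) - 1)) :=
    Summable.of_nonneg_of_le (fun k => mul_nonneg (by positivity) (DD_nonneg _ _)) hle
      (hfa.add hfb)
  have htsum : sumB (a + b) ≤ sumB a + sumB b := by
    have h1 : sumB (a + b) ≤ ∑' k, (fa k + fb k) := Summable.tsum_le_tsum hle hsumab (hfa.add hfb)
    have h2 : ∑' k, (fa k + fb k) = sumB a + sumB b := Summable.tsum_add hfa hfb
    linarith
  exact ⟨⟨hbdd, hsumab⟩, by rw [normB_eq, normB_eq, normB_eq]; linarith⟩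

lemma chiNeg_mem (n : ℤ) : 0 ≤ chiNeg n ∧ chiNeg n ≤ 1 := by
  unfold chiNeg; split_ifs <;> norm_num

lemma abs_pt (x : (ℤ → ℝ) × (ℤ → ℝ)) (r : ℝ) (hx : memB x) (hxr : normB x ≤ r) (n : ℤ) :
    |x.1 n| ≤ r ∧ |x.2 n| ≤ r := by
  have h := DD_le x hx n
  rw [← normB_eq] at h
  have h1 : DD x n ≤ r := le_trans h hxr
  unfold DD at h1
  constructor <;> [linarith [abs_nonneg (x.2 n)]; linarith [abs_nonneg (x.1 n)]]

lemma sq_diff_bound (r a c χ : ℝ) (ha : |a| ≤ r) (hc : |c| ≤ r)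
    (hχ0 : 0 ≤ χ) (hχ1 : χ ≤ 1) :
    |(a + χ) ^ 2 - (c + χ) ^ 2| ≤ 2 * (r + 1) * |a - c| := by
  have hid : (a + χ) ^ 2 - (c + χ) ^ 2 = (a - c) * (a + c + 2 * χ) := by ring
  rw [hid, abs_mul]
  have hb : |a + c + 2 * χ| ≤ 2 * (r + 1) := by
    rw [abs_le] at ha hc ⊢
    constructor <;> linarith [ha.1, ha.2, hc.1, hc.2]
  calc |a - c| * |a + c + 2 * χ| ≤ |a - c| * (2 * (r + 1)) :=
        mul_le_mul_of_nonneg_left hb (abs_nonneg _)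
    _ = 2 * (r + 1) * |a - c| := by ring

lemma first_comp_bound (r a b B c d D χ : ℝ) (hr : 0 < r)
    (ha : |a| ≤ r) (hb : |b| ≤ r) (hB : |B| ≤ r) (hc : |c| ≤ r) (hd : |d| ≤ r) (hD : |D| ≤ r)
    (hχ0 : 0 ≤ χ) (hχ1 : χ ≤ 1) :
    |(1 / 2) * (a + χ) * (B - b) - (1 / 2) * (c + χ) * (D - d)| ≤
      r * |a - c| + ((r + 1) / 2) * (|B - D| + |b - d|) := by
  have hid : (1 / 2) * (a + χ) * (B - b) - (1 / 2) * (c + χ) * (D - d) =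
      (1 / 2) * (a - c) * (B - b) + (1 / 2) * (c + χ) * ((B - D) - (b - d)) := by ring
  rw [hid]
  have h1 : |(1 / 2) * (a - c) * (B - b)| ≤ r * |a - c| := by
    rw [abs_mul, abs_mul]
    have hBb : |B - b| ≤ 2 * r := le_trans (abs_sub _ _) (by linarith)
    have : |1 / 2| * |a - c| * |B - b| ≤ |1 / 2| * |a - c| * (2 * r) :=
      mul_le_mul_of_nonneg_left hBb (by positivity)
    calc |1 / 2| * |a - c| * |B - b| ≤ |1 / 2| * |a - c| * (2 * r) := this
      _ = r * |a - c| := by rw [abs_of_pos (by norm_num : (0:ℝ) < 1/2)]; ring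
  have h2 : |(1 / 2) * (c + χ) * ((B - D) - (b - d))| ≤
      ((r + 1) / 2) * (|B - D| + |b - d|) := by
    rw [abs_mul, abs_mul]
    have hcχ : |c + χ| ≤ r + 1 := by
      rw [abs_le] at hc ⊢; constructor <;> linarith [hc.1, hc.2]
    have hsub : |(B - D) - (b - d)| ≤ |B - D| + |b - d| := abs_sub _ _
    have hh : |1 / 2| * |c + χ| ≤ |1 / 2| * (r + 1) :=
      mul_le_mul_of_nonneg_left hcχ (abs_nonneg _)
    calc |1 / 2| * |c + χ| * |(B - D) - (b - d)| ≤
          (|1 / 2| * (r + 1)) * (|B - D| + |b - d|) :=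
        mul_le_mul hh hsub (abs_nonneg _) (by positivity)
      _ = ((r + 1) / 2) * (|B - D| + |b - d|) := by
          rw [abs_of_pos (by norm_num : (0:ℝ) < 1/2)]; ring
  calc |(1 / 2) * (a - c) * (B - b) + (1 / 2) * (c + χ) * ((B - D) - (b - d))| ≤
        |(1 / 2) * (a - c) * (B - b)| + |(1 / 2) * (c + χ) * ((B - D) - (b - d))| :=
      abs_add_le _ _
    _ ≤ r * |a - c| + ((r + 1) / 2) * (|B - D| + |b - d|) := by linarith

lemma toda_dom (r : ℝ) (hr : 0 < r) (x y : (ℤ → ℝ) × (ℤ → ℝ))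
    (hx : memB x) (hy : memB y) (hxr : normB x ≤ r) (hyr : normB y ≤ r) (n : ℤ) :
    DD (todaF x - todaF y) n ≤
      (3 * (r + 1)) * (DD (x - y) n + DD (x - y) (n - 1) + DD (x - y) (n + 1)) := by
  have hxp := fun m => abs_pt x r hx hxr m
  have hyp := fun m => abs_pt y r hy hyr m
  have hχ := chiNeg_mem n
  have hχ' := chiNeg_mem (n - 1)
  have H1 := first_comp_bound r (x.1 n) (x.2 n) (x.2 (n + 1)) (y.1 n) (y.2 n) (y.2 (n + 1))
    (chiNeg n) hr (hxp n).1 (hxp n).2 (hxp (n + 1)).2 (hyp n).1 (hyp n).2 (hyp (n + 1)).2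
    hχ.1 hχ.2
  have H2 := sq_diff_bound r (x.1 n) (y.1 n) (chiNeg n) (hxp n).1 (hyp n).1 hχ.1 hχ.2
  have H3 := sq_diff_bound r (x.1 (n - 1)) (y.1 (n - 1)) (chiNeg (n - 1)) (hxp (n - 1)).1
    (hyp (n - 1)).1 hχ'.1 hχ'.2
  have Hsplit : |((x.1 n + chiNeg n) ^ 2 - (x.1 (n - 1) + chiNeg (n - 1)) ^ 2) -
      ((y.1 n + chiNeg n) ^ 2 - (y.1 (n - 1) + chiNeg (n - 1)) ^ 2)| ≤
      |(x.1 n + chiNeg n) ^ 2 - (y.1 n + chiNeg n) ^ 2| +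
      |(x.1 (n - 1) + chiNeg (n - 1)) ^ 2 - (y.1 (n - 1) + chiNeg (n - 1)) ^ 2| := by
    have hid : ((x.1 n + chiNeg n) ^ 2 - (x.1 (n - 1) + chiNeg (n - 1)) ^ 2) -
        ((y.1 n + chiNeg n) ^ 2 - (y.1 (n - 1) + chiNeg (n - 1)) ^ 2) =
        ((x.1 n + chiNeg n) ^ 2 - (y.1 n + chiNeg n) ^ 2) -
        ((x.1 (n - 1) + chiNeg (n - 1)) ^ 2 - (y.1 (n - 1) + chiNeg (n - 1)) ^ 2) := by ring
    rw [hid]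
    exact abs_sub _ _
  simp only [DD, todaF, Prod.fst_sub, Prod.snd_sub, Pi.sub_apply]
  have a1 : (0:ℝ) ≤ |x.1 n - y.1 n| := abs_nonneg _
  have a2 : (0:ℝ) ≤ |x.2 n - y.2 n| := abs_nonneg _
  have a3 : (0:ℝ) ≤ |x.1 (n - 1) - y.1 (n - 1)| := abs_nonneg _
  have a4 : (0:ℝ) ≤ |x.2 (n - 1) - y.2 (n - 1)| := abs_nonneg _
  have a5 : (0:ℝ) ≤ |x.1 (n + 1) - y.1 (n + 1)| := abs_nonneg _
  have a6 : (0:ℝ) ≤ |x.2 (n + 1) - y.2 (n + 1)| := abs_nonneg _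
  nlinarith [mul_nonneg (by linarith : (0:ℝ) ≤ r + 1) a1,
    mul_nonneg (by linarith : (0:ℝ) ≤ r + 1) a2,
    mul_nonneg (by linarith : (0:ℝ) ≤ r + 1) a3,
    mul_nonneg (by linarith : (0:ℝ) ≤ r + 1) a4,
    mul_nonneg (by linarith : (0:ℝ) ≤ r + 1) a5,
    mul_nonneg (by linarith : (0:ℝ) ≤ r + 1) a6]


lemma memB_neg (a : (ℤ → ℝ) × (ℤ → ℝ)) (ha : memB a) : memB (-a) := by
  have h1 : (fun n : ℕ => |(-a).1 (n : ℤ)| + |(-a).2 (n : ℤ)|) =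
      fun n : ℕ => |a.1 (n : ℤ)| + |a.2 (n : ℤ)| := by
    funext n; simp
  have h2 : (fun k : ℕ => ((k : ℝ) + 1) * (|(-a).1 (-(k : ℤ) - 1)| + |(-a).2 (-(k : ℤ) - 1)|)) =
      fun k : ℕ => ((k : ℝ) + 1) * (|a.1 (-(k : ℤ) - 1)| + |a.2 (-(k : ℤ) - 1)|) := by
    funext k; simp
  refine ⟨?_, ?_⟩
  · show BddAbove (Set.range fun n : ℕ => |(-a).1 (n : ℤ)| + |(-a).2 (n : ℤ)|)
    rw [h1]; exact ha.1
  · show Summable (fun k : ℕ => ((k : ℝ) + 1) * (|(-a).1 (-(k : ℤ) - 1)| + |(-a).2 (-(k : ℤ) - 1)|))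
    rw [h2]; exact ha.2

lemma memB_sub (a b : (ℤ → ℝ) × (ℤ → ℝ)) (ha : memB a) (hb : memB b) : memB (a - b) := by
  rw [sub_eq_add_neg]
  exact (memB_add a (-b) ha (memB_neg b hb)).1

lemma memB_zero : memB (0 : (ℤ → ℝ) × (ℤ → ℝ)) := by
  constructor
  · exact ⟨0, by rintro _ ⟨n, rfl⟩; simp⟩
  · have : (fun k : ℕ => ((k : ℝ) + 1) *
        (|(0 : (ℤ → ℝ) × (ℤ → ℝ)).1 (-(k : ℤ) - 1)| +
         |(0 : (ℤ → ℝ) × (ℤ → ℝ)).2 (-(k : ℤ) - 1)|)) = fun _ => 0 := by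
      funext k; simp
    rw [this]; exact summable_zero

lemma normB_zero : normB (0 : (ℤ → ℝ) × (ℤ → ℝ)) = 0 := by
  rw [normB]
  have h1 : (⨆ n : ℕ, (|(0 : (ℤ → ℝ) × (ℤ → ℝ)).1 (n : ℤ)| +
      |(0 : (ℤ → ℝ) × (ℤ → ℝ)).2 (n : ℤ)|)) = ⨆ _ : ℕ, (0 : ℝ) := by
    congr 1; funext n; simp
  have h2 : (fun k : ℕ => ((k : ℝ) + 1) *
      (|(0 : (ℤ → ℝ) × (ℤ → ℝ)).1 (-(k : ℤ) - 1)| +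
       |(0 : (ℤ → ℝ) × (ℤ → ℝ)).2 (-(k : ℤ) - 1)|)) = fun _ => 0 := by
    funext k; simp
  rw [h1, h2, ciSup_const, tsum_zero, add_zero]

lemma todaF_zero_DD_nat (n : ℕ) : DD (todaF 0) (n : ℤ) ≤ 1 := by
  simp only [DD, todaF, Prod.fst_zero, Prod.snd_zero, Pi.zero_apply, chiNeg]
  split_ifs <;> first | (exfalso; omega) | norm_num

lemma todaF_zero_DD_neg (k : ℕ) : DD (todaF 0) (-(k : ℤ) - 1) = 0 := by
  simp only [DD, todaF, Prod.fst_zero, Prod.snd_zero, Pi.zero_apply, chiNeg]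
  split_ifs <;> first | (exfalso; omega) | norm_num

lemma memB_todaF_zero : memB (todaF 0) ∧ normB (todaF 0) ≤ 1 := by
  have hsum : (fun k : ℕ => ((k : ℝ) + 1) * DD (todaF 0) (-(k : ℤ) - 1)) = fun _ => 0 := by
    funext k; rw [todaF_zero_DD_neg, mul_zero]
  have hmem : memB (todaF 0) := by
    rw [memB_iff]
    exact ⟨⟨1, by rintro _ ⟨n, rfl⟩; exact todaF_zero_DD_nat n⟩,
      by rw [hsum]; exact summable_zero⟩
  refine ⟨hmem, ?_⟩
  rw [normB_eq]
  have h1 : supB (todaF 0) ≤ 1 := ciSup_le todaF_zero_DD_nat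
  have h2 : sumB (todaF 0) = 0 := by rw [sumB, hsum, tsum_zero]
  linarith

/-- The Toda right-hand side `F` maps `B` into `B`, is bounded on bounded sets, and is
Lipschitz on bounded subsets of `B`. -/
theorem todaF_bounded_and_lipschitz_on_balls (r : ℝ) (hr : 0 < r) :
    ∃ K : ℝ, 0 < K ∧
      ∀ x y : (ℤ → ℝ) × (ℤ → ℝ), memB x → memB y → normB x ≤ r → normB y ≤ r →
        memB (todaF x) ∧ normB (todaF x) ≤ K ∧
        memB (todaF x - todaF y) ∧ normB (todaF x - todaF y) ≤ K * normB (x - y) := by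
  refine ⟨21 * (r + 1) * (r + 1) + 1, by nlinarith, ?_⟩
  intro x y hx hy hxr hyr
  have hC : (0 : ℝ) ≤ 3 * (r + 1) := by linarith
  -- Lipschitz part
  have hxy : memB (x - y) := memB_sub x y hx hy
  have hL := shift_lemma (x - y) (todaF x - todaF y) hxy (3 * (r + 1)) hC
    (fun n => toda_dom r hr x y hx hy hxr hyr n)
  -- bounded part
  have h0r : normB (0 : (ℤ → ℝ) × (ℤ → ℝ)) ≤ r := by rw [normB_zero]; linarith
  have hx0 : memB (x - 0) := by rw [sub_zero]; exact hx
  have hB := shift_lemma (x - 0) (todaF x - todaF 0) hx0 (3 * (r + 1)) hC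
    (fun n => toda_dom r hr x 0 hx memB_zero hxr h0r n)
  have hF0 := memB_todaF_zero
  have hdecomp : todaF x = (todaF x - todaF 0) + todaF 0 := by abel
  have hadd := memB_add _ _ hB.1 hF0.1
  have hmemFx : memB (todaF x) := by rw [hdecomp]; exact hadd.1
  have hnormFx : normB (todaF x) ≤ 21 * (r + 1) * (r + 1) + 1 := by
    have h1 : normB (todaF x) ≤ normB (todaF x - todaF 0) + normB (todaF 0) := by
      conv_lhs => rw [hdecomp]
      exact hadd.2
    have h2 : normB (todaF x - todaF 0) ≤ 7 * (3 * (r + 1)) * normB (x - 0) := hB.2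
    rw [sub_zero] at h2
    have h3 : 7 * (3 * (r + 1)) * normB x ≤ 7 * (3 * (r + 1)) * r :=
      mul_le_mul_of_nonneg_left hxr (by linarith)
    nlinarith [hF0.2]
  refine ⟨hmemFx, hnormFx, hL.1, ?_⟩
  have hN : 0 ≤ normB (x - y) := by
    rw [normB_eq]
    linarith [supB_nonneg _ hxy, sumB_nonneg (x - y)]
  have hK : 7 * (3 * (r + 1)) ≤ 21 * (r + 1) * (r + 1) + 1 := by nlinarith
  calc normB (todaF x - todaF y) ≤ 7 * (3 * (r + 1)) * normB (x - y) := hL.2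
    _ ≤ (21 * (r + 1) * (r + 1) + 1) * normB (x - y) :=
        mul_le_mul_of_nonneg_right hK hN
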